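/- Let k ≥ 1 and α ≥ 2 with k + α + 1 ≤ n, let G attain the maximum connective eccentricity index among all k-connected graphs of order n with independence number α, let A be a vertex cut of G with |A| = k, and let G_1, G_2 be the two components of G - A with |V(G_1)| ≥ |V(G_2)|. Then G_2 consists of a single vertex. -/

import Mathlib

open Finset
open scoped Classical

namespace CEI

variable {V : Type*}

/-- Degree of a vertex. -/
noncomputable def deg [Fintype V] (G : SimpleGraph V) (v : V) : ℕ :=
  (Finset.univ.filter fun u => G.Adj v u).card

/-- Eccentricity of a vertex. -/
noncomputable def ecc [Fintype V] (G : SimpleGraph V) (v : V) : ℕ :=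
  Finset.univ.sup fun u => G.dist v u

/-- Connective eccentricity index. -/
noncomputable def cei [Fintype V] (G : SimpleGraph V) : ℝ :=
  ∑ v : V, (deg G v : ℝ) / (ecc G v)

/-- Diameter. -/
noncomputable def diam [Fintype V] (G : SimpleGraph V) : ℕ :=
  Finset.univ.sup fun v => ecc G v

/-- `G` is `k`-connected: removing fewer than `k` vertices leaves a
connected graph with more than one vertex. -/
def KConnected [Fintype V] (k : ℕ) (G : SimpleGraph V) : Prop :=
  ∀ A : Finset V, A.card < k →
    (G.induce ((A : Set V)ᶜ)).Connected ∧ 1 < ((A : Set V)ᶜ).ncard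

/-- A set of pairwise non-adjacent vertices. -/
def IsIndepSet (G : SimpleGraph V) (s : Set V) : Prop :=
  s.Pairwise fun u v => ¬ G.Adj u v

/-- Independence number. -/
noncomputable def indepNum [Fintype V] (G : SimpleGraph V) : ℕ :=
  Finset.univ.sup fun s : Finset V => if IsIndepSet G ↑s then s.card else 0

/-- A vertex cut: deleting `A` disconnects `G`. -/
def IsVertexCut (G : SimpleGraph V) (A : Finset V) : Prop :=
  ¬ (G.induce ((A : Set V)ᶜ)).Preconnected

/-- Sequential join of complete graphs with part sizes `cs`. -/
def seqCompleteJoin (cs : List ℕ) : SimpleGraph ((i : Fin cs.length) × Fin (cs.get i)) where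
  Adj x y := x ≠ y ∧ (x.1.val = y.1.val ∨ x.1.val + 1 = y.1.val ∨ y.1.val + 1 = x.1.val)
  symm := ⟨fun x y ⟨h1, h2⟩ => ⟨h1.symm, by tauto⟩⟩
  loopless := ⟨fun x ⟨h, _⟩ => h rfl⟩

/-- `K_k ∨ (K_a ∪ K_b)`. -/
def KJoin2 (k a b : ℕ) : SimpleGraph (Fin (k + a + b)) where
  Adj x y := x ≠ y ∧ (x.val < k ∨ y.val < k ∨ (x.val < k + a ↔ y.val < k + a))
  symm := ⟨fun x y ⟨h1, h2⟩ => ⟨h1.symm, by tauto⟩⟩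
  loopless := ⟨fun x ⟨h, _⟩ => h rfl⟩

/-- `K_b ∨ a K_1`. -/
def splitGraph (b a : ℕ) : SimpleGraph (Fin (b + a)) where
  Adj x y := x ≠ y ∧ (x.val < b ∨ y.val < b)
  symm := ⟨fun x y ⟨h1, h2⟩ => ⟨h1.symm, by tauto⟩⟩
  loopless := ⟨fun x ⟨h, _⟩ => h rfl⟩

/-- `S_{n,α} = K_k ∨ (K_1 ∪ (K_{n-k-α} ∨ (α-1)K_1))`; vertices `0,…,k-1` form the
clique `K_k` joined to everything, vertex `k` is the isolated-ish `K_1`, vertices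
`k+1,…,n-α` form `K_{n-k-α}`, and vertices `n-α+1,…,n-1` are the `α-1` independent ones. -/
def Sgraph (n k a : ℕ) : SimpleGraph (Fin n) where
  Adj x y := x ≠ y ∧ (x.val < k ∨ y.val < k ∨
    (x.val ≠ k ∧ y.val ≠ k ∧ ¬(n + 1 - a ≤ x.val ∧ n + 1 - a ≤ y.val)))
  symm := ⟨fun x y ⟨h1, h2⟩ => ⟨h1.symm, by tauto⟩⟩
  loopless := ⟨fun x ⟨h, _⟩ => h rfl⟩


section Aux
variable [Fintype V] {G : SimpleGraph V}

lemma dist_le_ecc (G : SimpleGraph V) (v u : V) : G.dist v u ≤ ecc G v :=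
  Finset.le_sup (Finset.mem_univ u)

lemma ecc_le {G : SimpleGraph V} {v : V} {m : ℕ} (h : ∀ u, G.dist v u ≤ m) : ecc G v ≤ m :=
  Finset.sup_le fun u _ => h u

lemma card_le_indepNum {I : Finset V} (h : IsIndepSet G ↑I) : I.card ≤ indepNum G := by
  have := Finset.le_sup (f := fun s : Finset V => if IsIndepSet G ↑s then s.card else 0)
    (Finset.mem_univ I)
  simp only [if_pos h] at this
  exact this

lemma exists_indep_card_eq (h : indepNum G ≠ 0) :
    ∃ I : Finset V, IsIndepSet G ↑I ∧ I.card = indepNum G := by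
  obtain ⟨I, -, hI⟩ := Finset.exists_mem_eq_sup Finset.univ Finset.univ_nonempty
    (fun s : Finset V => if IsIndepSet G ↑s then s.card else 0)
  by_cases hind : IsIndepSet G ↑I
  · exact ⟨I, hind, by rw [indepNum, hI, if_pos hind]⟩
  · exfalso; apply h; rw [indepNum, hI, if_neg hind]

lemma one_le_ecc {v u : V} (hr : G.Reachable v u) (hne : v ≠ u) : 1 ≤ ecc G v :=
  le_trans (hr.pos_dist_of_ne hne) (dist_le_ecc G v u)

lemma two_le_ecc {v u : V} (hr : G.Reachable v u) (hne : v ≠ u) (hadj : ¬ G.Adj v u) :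
    2 ≤ ecc G v := by
  refine le_trans ?_ (dist_le_ecc G v u)
  have h0 : G.dist v u ≠ 0 := Nat.pos_iff_ne_zero.mp (hr.pos_dist_of_ne hne)
  have h1 : G.dist v u ≠ 1 := fun h => hadj (SimpleGraph.dist_eq_one_iff_adj.mp h)
  omega

lemma deg_le_of_subset {v : V} {T : Finset V} (h : ∀ u, G.Adj v u → u ∈ T) :
    deg G v ≤ T.card := by
  apply Finset.card_le_card
  intro u hu
  simp only [Finset.mem_filter] at hu
  exact h u hu.2

lemma le_deg_of_subset {v : V} {T : Finset V} (h : ∀ u ∈ T, G.Adj v u) :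
    T.card ≤ deg G v := by
  apply Finset.card_le_card
  intro u hu
  simp only [deg, Finset.mem_filter]
  exact ⟨Finset.mem_univ u, h u hu⟩

end Aux

section SgraphFacts
variable {n k a : ℕ}

lemma sgraph_adj {x y : Fin n} {k a : ℕ} : (Sgraph n k a).Adj x y ↔ x ≠ y ∧ (x.val < k ∨ y.val < k ∨
    (x.val ≠ k ∧ y.val ≠ k ∧ ¬(n + 1 - a ≤ x.val ∧ n + 1 - a ≤ y.val))) := Iff.rfl

variable (hk : 1 ≤ k) (ha : 2 ≤ a) (hn : k + a + 1 ≤ n)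

include hk ha hn

lemma sgraph_adj_z0 {x : Fin n} (hx : x ≠ ⟨0, by omega⟩) : (Sgraph n k a).Adj x ⟨0, by omega⟩ :=
  ⟨hx, Or.inr (Or.inl (by simp; omega))⟩

lemma sgraph_connected : (Sgraph n k a).Connected := by
  have hreach : ∀ x : Fin n, (Sgraph n k a).Reachable x ⟨0, by omega⟩ := by
    intro x
    by_cases hx : x = ⟨0, by omega⟩
    · exact hx ▸ SimpleGraph.Reachable.refl _
    · exact (sgraph_adj_z0 hk ha hn hx).reachable
  rw [SimpleGraph.connected_iff]
  exact ⟨fun x y => (hreach x).trans (hreach y).symm, ⟨⟨0, by omega⟩⟩⟩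

lemma sgraph_ecc_le_two (i : Fin n) : ecc (Sgraph n k a) i ≤ 2 := by
  have hc := sgraph_connected hk ha hn
  apply ecc_le
  intro u
  have hd : ∀ x : Fin n, (Sgraph n k a).dist x ⟨0, by omega⟩ ≤ 1 := by
    intro x
    by_cases hx : x = ⟨0, by omega⟩
    · rw [hx, SimpleGraph.dist_self]; omega
    · exact le_of_eq (SimpleGraph.dist_eq_one_iff_adj.mpr (sgraph_adj_z0 hk ha hn hx))
  calc (Sgraph n k a).dist i u ≤ (Sgraph n k a).dist i ⟨0, by omega⟩
        + (Sgraph n k a).dist ⟨0, by omega⟩ u := hc.dist_triangle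
    _ ≤ 1 + 1 := by
        have := hd i
        have h2 : (Sgraph n k a).dist (⟨0, by omega⟩ : Fin n) u ≤ 1 := by
          rw [SimpleGraph.dist_comm]; exact hd u
        omega
    _ = 2 := rfl

lemma sgraph_one_le_ecc (i : Fin n) : 1 ≤ ecc (Sgraph n k a) i := by
  have hc := sgraph_connected hk ha hn
  by_cases hx : i = ⟨0, by omega⟩
  · refine one_le_ecc (hc i ⟨1, by omega⟩) ?_
    intro h
    have := congrArg Fin.val h
    rw [hx] at this
    simp at this
  · exact one_le_ecc (hc i ⟨0, by omega⟩) hx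

lemma sgraph_ecc_low {i : Fin n} (hi : i.val < k) : ecc (Sgraph n k a) i ≤ 1 := by
  apply ecc_le
  intro u
  by_cases hu : u = i
  · rw [hu, SimpleGraph.dist_self]; omega
  · exact le_of_eq (SimpleGraph.dist_eq_one_iff_adj.mpr ⟨fun h => hu h.symm, Or.inl hi⟩)

lemma sgraph_deg_low {i : Fin n} (hi : i.val < k) : n - 1 ≤ deg (Sgraph n k a) i := by
  have h := le_deg_of_subset (G := Sgraph n k a) (v := i) (T := Finset.univ.erase i)
    (fun u hu => ⟨fun h => (Finset.mem_erase.mp hu).1 h.symm, Or.inl hi⟩)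
  rwa [Finset.card_erase_of_mem (Finset.mem_univ i), Finset.card_univ, Fintype.card_fin] at h

lemma sgraph_deg_k {i : Fin n} (hi : i.val = k) : k ≤ deg (Sgraph n k a) i := by
  have h := le_deg_of_subset (G := Sgraph n k a) (v := i) (T := Finset.Iio ⟨k, by omega⟩)
    (fun u hu => by
      have hu' : u.val < k := by simpa [Finset.mem_Iio, Fin.lt_def] using hu
      refine ⟨?_, Or.inr (Or.inl hu')⟩
      intro h
      rw [← h] at hu'
      omega)
  rwa [Fin.card_Iio] at h

lemma sgraph_deg_mid {i : Fin n} (hi1 : k < i.val) (hi2 : i.val < n + 1 - a) :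
    n - 2 ≤ deg (Sgraph n k a) i := by
  have hkn : k < n := by omega
  have hne : (⟨k, hkn⟩ : Fin n) ≠ i := by
    intro h
    rw [Fin.ext_iff] at h
    simp at h
    omega
  have h := le_deg_of_subset (G := Sgraph n k a) (v := i)
    (T := (Finset.univ.erase i).erase ⟨k, hkn⟩)
    (fun u hu => by
      obtain ⟨hu1, hu2⟩ := Finset.mem_erase.mp hu
      have hu3 : u ≠ i := (Finset.mem_erase.mp hu2).1
      have hu4 : u.val ≠ k := by
        intro h
        apply hu1
        rw [Fin.ext_iff]
        simpa using h
      exact ⟨fun h => hu3 h.symm, Or.inr (Or.inr ⟨by omega, hu4, by omega⟩)⟩)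
  rwa [Finset.card_erase_of_mem (Finset.mem_erase.mpr ⟨hne, Finset.mem_univ _⟩),
    Finset.card_erase_of_mem (Finset.mem_univ i), Finset.card_univ, Fintype.card_fin] at h

lemma sgraph_deg_top {i : Fin n} (hi : n + 1 - a ≤ i.val) :
    n - a ≤ deg (Sgraph n k a) i := by
  have hkn : k < n := by omega
  have hbn : n + 1 - a < n := by omega
  have hmem : (⟨k, hkn⟩ : Fin n) ∈ Finset.Iio (⟨n + 1 - a, hbn⟩ : Fin n) := by
    simp [Finset.mem_Iio, Fin.lt_def]
    omega
  have h := le_deg_of_subset (G := Sgraph n k a) (v := i)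
    (T := (Finset.Iio (⟨n + 1 - a, hbn⟩ : Fin n)).erase ⟨k, hkn⟩)
    (fun u hu => by
      obtain ⟨hu1, hu2⟩ := Finset.mem_erase.mp hu
      have hu3 : u.val < n + 1 - a := by simpa [Finset.mem_Iio, Fin.lt_def] using hu2
      have hu4 : u.val ≠ k := by
        intro h
        apply hu1
        rw [Fin.ext_iff]
        simpa using h
      refine ⟨?_, Or.inr (Or.inr ⟨by omega, hu4, by omega⟩)⟩
      intro h
      rw [← h] at hu3
      omega)
  rw [Finset.card_erase_of_mem hmem, Fin.card_Iio] at h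
  have h2 : n + 1 - a - 1 ≤ deg (Sgraph n k a) i := by simpa using h
  omega

lemma sgraph_cei_lower :
    (k : ℝ) * ((n : ℝ) - 1) + (k : ℝ) / 2 + ((n : ℝ) - k - a) * ((n : ℝ) - 2) / 2
      + ((a : ℝ) - 1) * ((n : ℝ) - a) / 2 ≤ cei (Sgraph n k a) := by
  classical
  set L : ℕ → ℝ := fun j => if j < k then (n : ℝ) - 1 else
    (if j = k then (k : ℝ) else if j < n + 1 - a then (n : ℝ) - 2 else (n : ℝ) - a) / 2 with hL
  have hpoint : ∀ i : Fin n, L i.val ≤ (deg (Sgraph n k a) i : ℝ) / (ecc (Sgraph n k a) i) := by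
    intro i
    have h1 := sgraph_one_le_ecc hk ha hn (i := i)
    have h2 := sgraph_ecc_le_two hk ha hn (i := i)
    have hepos : (0 : ℝ) < (ecc (Sgraph n k a) i : ℝ) := by exact_mod_cast h1
    by_cases hik : i.val < k
    · have he : ecc (Sgraph n k a) i = 1 := le_antisymm (sgraph_ecc_low hk ha hn hik) h1
      have hd : ((n : ℝ) - 1) ≤ (deg (Sgraph n k a) i : ℝ) := by
        have h := sgraph_deg_low hk ha hn (a := a) hik
        have h' := (Nat.cast_le (α := ℝ)).mpr h
        rw [Nat.cast_sub (by omega : 1 ≤ n)] at h'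
        simpa using h'
      simp only [hL, if_pos hik, he, Nat.cast_one, div_one]
      exact hd
    · have hbound : (if i.val = k then (k : ℝ) else if i.val < n + 1 - a then (n : ℝ) - 2
          else (n : ℝ) - a) ≤ (deg (Sgraph n k a) i : ℝ) := by
        split_ifs with hek hlb
        · exact_mod_cast sgraph_deg_k hk ha hn hek
        · have h := sgraph_deg_mid hk ha hn (i := i) (by omega) hlb
          have h' := (Nat.cast_le (α := ℝ)).mpr h
          rw [Nat.cast_sub (by omega : 2 ≤ n)] at h'
          simpa using h'
        · have h := sgraph_deg_top hk ha hn (i := i) (by omega)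
          have h' := (Nat.cast_le (α := ℝ)).mpr h
          rw [Nat.cast_sub (by omega : a ≤ n)] at h'
          simpa using h'
      have hdiv : (deg (Sgraph n k a) i : ℝ) / 2 ≤
          (deg (Sgraph n k a) i : ℝ) / (ecc (Sgraph n k a) i) :=
        div_le_div_of_nonneg_left (by positivity) hepos (by exact_mod_cast h2)
      refine le_trans ?_ hdiv
      simp only [hL, if_neg hik]
      linarith
  have hsum : ∑ i : Fin n, L i.val ≤ cei (Sgraph n k a) :=
    Finset.sum_le_sum (fun i _ => hpoint i)
  refine le_trans (le_of_eq ?_) hsum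
  rw [Fin.sum_univ_eq_sum_range L n, Finset.range_eq_Ico,
    ← Finset.sum_Ico_consecutive L (by omega : 0 ≤ k) (by omega : k ≤ n),
    ← Finset.sum_Ico_consecutive L (by omega : k ≤ k + 1) (by omega : k + 1 ≤ n),
    ← Finset.sum_Ico_consecutive L (by omega : k + 1 ≤ n + 1 - a) (by omega : n + 1 - a ≤ n)]
  have hLv : ∀ j : ℕ, L j = if j < k then (n : ℝ) - 1 else
    (if j = k then (k : ℝ) else if j < n + 1 - a then (n : ℝ) - 2 else (n : ℝ) - a) / 2 :=
    fun _ => rfl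
  have e1 : ∑ j ∈ Finset.Ico 0 k, L j = (k : ℝ) * ((n : ℝ) - 1) := by
    calc ∑ j ∈ Finset.Ico 0 k, L j = ∑ _j ∈ Finset.Ico 0 k, ((n : ℝ) - 1) :=
          Finset.sum_congr rfl (fun j hj => by
            rw [hLv j, if_pos (Finset.mem_Ico.mp hj).2])
      _ = (k : ℝ) * ((n : ℝ) - 1) := by
          rw [Finset.sum_const, Nat.card_Ico, nsmul_eq_mul]
          norm_num
  have e2 : ∑ j ∈ Finset.Ico k (k + 1), L j = (k : ℝ) / 2 := by
    rw [Nat.Ico_succ_singleton, Finset.sum_singleton, hLv k, if_neg (by omega), if_pos rfl]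
  have e3 : ∑ j ∈ Finset.Ico (k + 1) (n + 1 - a), L j
      = ((n : ℝ) - k - a) * (((n : ℝ) - 2) / 2) := by
    calc ∑ j ∈ Finset.Ico (k + 1) (n + 1 - a), L j
        = ∑ _j ∈ Finset.Ico (k + 1) (n + 1 - a), (((n : ℝ) - 2) / 2) :=
          Finset.sum_congr rfl (fun j hj => by
            obtain ⟨hj1, hj2⟩ := Finset.mem_Ico.mp hj
            rw [hLv j, if_neg (by omega), if_neg (by omega), if_pos hj2])
      _ = ((n : ℝ) - k - a) * (((n : ℝ) - 2) / 2) := by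
          rw [Finset.sum_const, Nat.card_Ico, nsmul_eq_mul]
          have h2 : ((n + 1 - a - (k + 1) : ℕ) : ℝ) = (n : ℝ) - k - a := by
            have h : n + 1 - a - (k + 1) = n - (k + a) := by omega
            rw [h, Nat.cast_sub (by omega : k + a ≤ n)]
            push_cast
            ring
          rw [h2]
  have e4 : ∑ j ∈ Finset.Ico (n + 1 - a) n, L j = ((a : ℝ) - 1) * (((n : ℝ) - a) / 2) := by
    calc ∑ j ∈ Finset.Ico (n + 1 - a) n, L j
        = ∑ _j ∈ Finset.Ico (n + 1 - a) n, (((n : ℝ) - a) / 2) :=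
          Finset.sum_congr rfl (fun j hj => by
            obtain ⟨hj1, hj2⟩ := Finset.mem_Ico.mp hj
            rw [hLv j, if_neg (by omega), if_neg (by omega), if_neg (by omega)])
      _ = ((a : ℝ) - 1) * (((n : ℝ) - a) / 2) := by
          rw [Finset.sum_const, Nat.card_Ico, nsmul_eq_mul]
          have h2 : ((n - (n + 1 - a) : ℕ) : ℝ) = (a : ℝ) - 1 := by
            have h : n - (n + 1 - a) = a - 1 := by omega
            rw [h, Nat.cast_sub (by omega : 1 ≤ a)]
            push_cast
            ring
          rw [h2]
  rw [e1, e2, e3, e4]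
  ring

lemma sgraph_kconnected : KConnected k (Sgraph n k a) := by
  intro B hB
  constructor
  · -- find a low vertex outside B
    have hsub : ¬ (Finset.Iio (⟨k, by omega⟩ : Fin n) ⊆ B) := by
      intro hsub
      have := Finset.card_le_card hsub
      rw [Fin.card_Iio] at this
      simp at this
      omega
    obtain ⟨i, hiI, hiB⟩ := Finset.not_subset.mp hsub
    have hik : i.val < k := by simpa [Finset.mem_Iio, Fin.lt_def] using hiI
    have hiC : i ∈ ((B : Set (Fin n))ᶜ) := by simpa using hiB
    rw [SimpleGraph.connected_iff]
    refine ⟨?_, ⟨⟨i, hiC⟩⟩⟩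
    have hreach : ∀ x : ((B : Set (Fin n))ᶜ : Set (Fin n)),
        ((Sgraph n k a).induce ((B : Set (Fin n))ᶜ)).Reachable x ⟨i, hiC⟩ := by
      intro x
      by_cases hx : x = ⟨i, hiC⟩
      · exact hx ▸ SimpleGraph.Reachable.refl _
      · refine SimpleGraph.Adj.reachable ?_
        have hne : (x : Fin n) ≠ i := fun h => hx (Subtype.ext h)
        show (Sgraph n k a).Adj (x : Fin n) i
        exact ⟨hne, Or.inr (Or.inl hik)⟩
    exact fun x y => (hreach x).trans (hreach y).symm
  · have hcompl := Set.ncard_add_ncard_compl (B : Set (Fin n))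
    rw [Set.ncard_coe_finset, Nat.card_eq_fintype_card, Fintype.card_fin] at hcompl
    omega

lemma sgraph_indepNum : indepNum (Sgraph n k a) = a := by
  have hkn : k < n := by omega
  have hbn : n + 1 - a < n := by omega
  set k' : Fin n := ⟨k, hkn⟩ with hk'
  set b' : Fin n := ⟨n + 1 - a, hbn⟩ with hb'
  have hkb : k' ∉ Finset.Ici b' := by
    simp [Finset.mem_Ici, Fin.le_def, hk', hb']
    omega
  apply le_antisymm
  · -- indepNum ≤ a
    apply Finset.sup_le
    intro J _
    split_ifs with hJ
    · -- J independent implies card ≤ a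
      by_cases h1 : ∃ u ∈ J, u.val < k
      · obtain ⟨u, huJ, huk⟩ := h1
        have : J ⊆ {u} := by
          intro v hv
          rw [Finset.mem_singleton]
          by_contra hvu
          exact hJ (Finset.mem_coe.mpr huJ) (Finset.mem_coe.mpr hv)
            (fun h => hvu h.symm) ⟨fun h => hvu h.symm, Or.inl huk⟩
        calc J.card ≤ 1 := by simpa using Finset.card_le_card this
          _ ≤ a := by omega
      · push_neg at h1
        by_cases h2 : ∃ m ∈ J, k < m.val ∧ m.val < n + 1 - a
        · obtain ⟨m, hmJ, hm1, hm2⟩ := h2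
          have : J ⊆ {m, k'} := by
            intro v hv
            simp only [Finset.mem_insert, Finset.mem_singleton]
            by_contra hvm
            push_neg at hvm
            obtain ⟨hv1, hv2⟩ := hvm
            have hvk : k < v.val := by
              have := h1 v hv
              have hvk' : v.val ≠ k := fun h => hv2 (Fin.ext (by simp [hk', h]))
              omega
            exact hJ (Finset.mem_coe.mpr hmJ) (Finset.mem_coe.mpr hv)
              (fun h => hv1 h.symm)
              ⟨fun h => hv1 h.symm, Or.inr (Or.inr ⟨by omega, by omega, by omega⟩)⟩
          calc J.card ≤ ({m, k'} : Finset (Fin n)).card := Finset.card_le_card this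
            _ ≤ 2 := Finset.card_insert_le _ _ |>.trans (by simp)
            _ ≤ a := ha
        · push_neg at h2
          have : J ⊆ insert k' (Finset.Ici b') := by
            intro v hv
            simp only [Finset.mem_insert, Finset.mem_Ici]
            have hv1 := h1 v hv
            have hv2 := h2 v hv
            rcases Nat.lt_or_ge v.val (n + 1 - a) with h | h
            · left
              apply Fin.ext
              simp only [hk']
              omega
            · right
              rw [Fin.le_def]
              simpa [hb'] using h
          calc J.card ≤ (insert k' (Finset.Ici b')).card := Finset.card_le_card this
            _ = (Finset.Ici b').card + 1 := Finset.card_insert_of_notMem hkb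
            _ = a := by
                rw [Fin.card_Ici]
                simp only [hb']
                omega
    · omega
  · -- a ≤ indepNum : explicit independent set
    have hindep : IsIndepSet (Sgraph n k a) ↑(insert k' (Finset.Ici b')) := by
      intro u hu v hv huv hadj
      simp only [Finset.coe_insert, Set.mem_insert_iff, Finset.mem_coe, Finset.mem_Ici] at hu hv
      obtain ⟨-, hor⟩ := hadj
      have hku : u = k' ∨ n + 1 - a ≤ u.val := by
        rcases hu with h | h
        · exact Or.inl h
        · exact Or.inr (by simpa [Fin.le_def, hb'] using h)
      have hkv : v = k' ∨ n + 1 - a ≤ v.val := by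
        rcases hv with h | h
        · exact Or.inl h
        · exact Or.inr (by simpa [Fin.le_def, hb'] using h)
      have hu' : ¬ u.val < k := by
        rcases hku with h | h
        · simp [h, hk']
        · omega
      have hv' : ¬ v.val < k := by
        rcases hkv with h | h
        · simp [h, hk']
        · omega
      rcases hor with h | h | ⟨huk, hvk, hnb⟩
      · exact hu' h
      · exact hv' h
      · rcases hku with h | h
        · exact huk (by simp [h, hk'])
        · rcases hkv with h' | h'
          · exact hvk (by simp [h', hk'])
          · exact hnb ⟨h, h'⟩
    have h := card_le_indepNum hindep
    rw [Finset.card_insert_of_notMem hkb, Fin.card_Ici] at h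
    have hcard : n - (b' : ℕ) + 1 = a := by simp only [hb']; omega
    rwa [hcard] at h

end SgraphFacts

set_option maxHeartbeats 1600000 in
/-- with `G` as in Statement 10 and `G₁, G₂` the two components of
`G - A` with `|V(G₁)| ≥ |V(G₂)|`, the component `G₂` is a single vertex. -/
theorem smaller_component_trivial {V : Type} [Fintype V] (G : SimpleGraph V) (n k a : ℕ)
    (hk : 1 ≤ k) (ha : 2 ≤ a) (hn : k + a + 1 ≤ n)
    (hcard : Fintype.card V = n) (hconn : KConnected k G) (hindep : indepNum G = a)
    (hmax : ∀ (W : Type) [Fintype W] (H : SimpleGraph W),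
      Fintype.card W = n → KConnected k H → indepNum H = a → cei H ≤ cei G)
    (A : Finset V) (hA : IsVertexCut G A) (hAcard : A.card = k)
    (c₁ c₂ : (G.induce ((A : Set V)ᶜ)).ConnectedComponent) (hne : c₁ ≠ c₂)
    (hall : ∀ c, c = c₁ ∨ c = c₂) (hle : c₂.supp.ncard ≤ c₁.supp.ncard) :
    c₂.supp.ncard = 1 := by
  classical
  by_contra h2
  -- G is connected
  have hGconn : G.Connected := by
    have h := (hconn ∅ (by rw [Finset.card_empty]; omega)).1
    have he : (((∅ : Finset V) : Set V)ᶜ) = (Set.univ : Set V) := by simp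
    rw [he] at h
    exact (SimpleGraph.induceUnivIso G).connected_iff.mp h
  set D1 : Set V := Subtype.val '' c₁.supp with hD1def
  set D2 : Set V := Subtype.val '' c₂.supp with hD2def
  set F1 : Finset V := D1.toFinset with hF1def
  set F2 : Finset V := D2.toFinset with hF2def
  set n₁ : ℕ := F1.card with hn1def
  set n₂ : ℕ := F2.card with hn2def
  have hmemF1 : ∀ v : V, v ∈ F1 ↔ ∃ hv : v ∈ ((A : Set V)ᶜ),
      (G.induce ((A : Set V)ᶜ)).connectedComponentMk ⟨v, hv⟩ = c₁ := by
    intro v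
    rw [hF1def, Set.mem_toFinset, hD1def]
    constructor
    · rintro ⟨x, hx, rfl⟩
      exact ⟨x.2, hx⟩
    · rintro ⟨hv, hc⟩
      exact ⟨⟨v, hv⟩, hc, rfl⟩
  have hmemF2 : ∀ v : V, v ∈ F2 ↔ ∃ hv : v ∈ ((A : Set V)ᶜ),
      (G.induce ((A : Set V)ᶜ)).connectedComponentMk ⟨v, hv⟩ = c₂ := by
    intro v
    rw [hF2def, Set.mem_toFinset, hD2def]
    constructor
    · rintro ⟨x, hx, rfl⟩
      exact ⟨x.2, hx⟩
    · rintro ⟨hv, hc⟩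
      exact ⟨⟨v, hv⟩, hc, rfl⟩
  -- cards
  have hn2card : c₂.supp.ncard = n₂ := by
    rw [hn2def, hF2def]
    rw [← Set.ncard_eq_toFinset_card' D2, hD2def,
      Set.ncard_image_of_injective _ Subtype.val_injective]
  have hn1card : c₁.supp.ncard = n₁ := by
    rw [hn1def, hF1def]
    rw [← Set.ncard_eq_toFinset_card' D1, hD1def,
      Set.ncard_image_of_injective _ Subtype.val_injective]
  -- n₂ ≥ 2
  have hn2pos : 1 ≤ n₂ := by
    obtain ⟨x, hx⟩ := c₂.exists_rep
    have : (x : V) ∈ F2 := (hmemF2 x).mpr ⟨x.2, hx⟩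
    rw [hn2def]
    exact Finset.card_pos.mpr ⟨x, this⟩
  have hn2ge : 2 ≤ n₂ := by
    rcases Nat.lt_or_ge n₂ 2 with h | h
    · exfalso; apply h2; rw [hn2card]; omega
    · exact h
  have hn1ge : 2 ≤ n₁ := le_trans hn2ge (by rw [← hn1card, ← hn2card]; exact hle)
  -- membership exclusivity
  have hF1A : ∀ v ∈ F1, v ∉ A := by
    intro v hv
    obtain ⟨hvS, -⟩ := (hmemF1 v).mp hv
    simpa using hvS
  have hF2A : ∀ v ∈ F2, v ∉ A := by
    intro v hv
    obtain ⟨hvS, -⟩ := (hmemF2 v).mp hv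
    simpa using hvS
  have hF12 : ∀ v ∈ F1, v ∉ F2 := by
    intro v hv1 hv2
    obtain ⟨h1, hc1⟩ := (hmemF1 v).mp hv1
    obtain ⟨h2', hc2⟩ := (hmemF2 v).mp hv2
    exact hne (hc1 ▸ hc2 ▸ rfl)
  have hcover : ∀ v : V, v ∉ A → v ∈ F1 ∨ v ∈ F2 := by
    intro v hv
    have hvS : v ∈ ((A : Set V)ᶜ) := by simpa using hv
    rcases hall ((G.induce ((A : Set V)ᶜ)).connectedComponentMk ⟨v, hvS⟩) with h | h
    · exact Or.inl ((hmemF1 v).mpr ⟨hvS, h⟩)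
    · exact Or.inr ((hmemF2 v).mpr ⟨hvS, h⟩)
  -- cardinality: n = k + n₁ + n₂
  have hdisjA1 : Disjoint A F1 := Finset.disjoint_right.mpr hF1A
  have hdisjA2 : Disjoint A F2 := Finset.disjoint_right.mpr hF2A
  have hdisj12 : Disjoint F1 F2 := Finset.disjoint_left.mpr hF12
  have huniv : A ∪ F1 ∪ F2 = Finset.univ := by
    apply Finset.eq_univ_iff_forall.mpr
    intro v
    simp only [Finset.mem_union]
    by_cases hv : v ∈ A
    · exact Or.inl (Or.inl hv)
    · rcases hcover v hv with h | h
      · exact Or.inl (Or.inr h)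
      · exact Or.inr h
  have hcards : k + n₁ + n₂ = n := by
    have := congrArg Finset.card huniv
    rw [Finset.card_union_of_disjoint (by
        rw [Finset.disjoint_union_left]
        exact ⟨hdisjA2, hdisj12⟩),
      Finset.card_union_of_disjoint hdisjA1, Finset.card_univ, hcard, hAcard] at this
    omega
  -- cross non-adjacency
  have hcross : ∀ v ∈ F1, ∀ w ∈ F2, ¬ G.Adj v w := by
    intro v hv w hw hadj
    obtain ⟨hvS, hc1⟩ := (hmemF1 v).mp hv
    obtain ⟨hwS, hc2⟩ := (hmemF2 w).mp hw
    have hadj' : (G.induce ((A : Set V)ᶜ)).Adj ⟨v, hvS⟩ ⟨w, hwS⟩ := hadj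
    have := SimpleGraph.ConnectedComponent.connectedComponentMk_eq_of_adj hadj'
    exact hne (hc1 ▸ hc2 ▸ this ▸ rfl)
  -- independent set of size a
  obtain ⟨I, hI, hIcard⟩ := exists_indep_card_eq (G := G) (by rw [hindep]; omega)
  rw [hindep] at hIcard
  set IA : Finset V := A ∩ I with hIAdef
  set I1 : Finset V := F1 ∩ I with hI1def
  set I2 : Finset V := F2 ∩ I with hI2def
  set s : ℕ := IA.card with hsdef
  set a₁ : ℕ := I1.card with ha1def
  set a₂ : ℕ := I2.card with ha2def
  have hIA_A : IA ⊆ A := Finset.inter_subset_left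
  have hI1_F1 : I1 ⊆ F1 := Finset.inter_subset_left
  have hI2_F2 : I2 ⊆ F2 := Finset.inter_subset_left
  have hsk : s ≤ k := by rw [hsdef, ← hAcard]; exact Finset.card_le_card hIA_A
  have ha1n1 : a₁ ≤ n₁ := by rw [ha1def, hn1def]; exact Finset.card_le_card hI1_F1
  have ha2n2 : a₂ ≤ n₂ := by rw [ha2def, hn2def]; exact Finset.card_le_card hI2_F2
  have hIsplit : s + a₁ + a₂ = a := by
    have huI : IA ∪ I1 ∪ I2 = I := by
      rw [hIAdef, hI1def, hI2def, ← Finset.union_inter_distrib_right,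
        ← Finset.union_inter_distrib_right, huniv, Finset.univ_inter]
    have hd1 : Disjoint IA I1 := hdisjA1.mono hIA_A hI1_F1
    have hd2 : Disjoint IA I2 := hdisjA2.mono hIA_A hI2_F2
    have hd3 : Disjoint I1 I2 := hdisj12.mono hI1_F1 hI2_F2
    have := congrArg Finset.card huI
    rw [Finset.card_union_of_disjoint (by
        rw [Finset.disjoint_union_left]; exact ⟨hd2, hd3⟩),
      Finset.card_union_of_disjoint hd1, hIcard] at this
    exact this
  -- extension fact: a vertex non-adjacent to all of I and outside I contradicts maximality
  have hgrow : ∀ w : V, w ∉ I → (∀ v ∈ I, ¬ G.Adj w v) → False := by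
    intro w hwI hcr
    have hind : IsIndepSet G ↑(insert w I) := by
      intro u hu v hv huv
      simp only [Finset.coe_insert, Set.mem_insert_iff, Finset.mem_coe] at hu hv
      rcases hu with rfl | hu
      · rcases hv with rfl | hv
        · exact absurd rfl huv
        · exact hcr v hv
      · rcases hv with rfl | hv
        · exact fun hadj => hcr u hu hadj.symm
        · exact hI hu hv huv
    have := card_le_indepNum hind
    rw [Finset.card_insert_of_notMem hwI, hIcard, hindep] at this
    omega
  have hIsubF1 : s = 0 → a₂ = 0 → I ⊆ F1 := by
    intro hs0 ha20 v hv
    by_cases hvA : v ∈ A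
    · exfalso
      have hm : v ∈ IA := Finset.mem_inter.mpr ⟨hvA, hv⟩
      rw [Finset.card_eq_zero.mp hs0] at hm
      simp at hm
    · rcases hcover v hvA with h | h
      · exact h
      · exfalso
        have hm : v ∈ I2 := Finset.mem_inter.mpr ⟨h, hv⟩
        rw [Finset.card_eq_zero.mp ha20] at hm
        simp at hm
  have hIsubF2 : s = 0 → a₁ = 0 → I ⊆ F2 := by
    intro hs0 ha10 v hv
    by_cases hvA : v ∈ A
    · exfalso
      have hm : v ∈ IA := Finset.mem_inter.mpr ⟨hvA, hv⟩
      rw [Finset.card_eq_zero.mp hs0] at hm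
      simp at hm
    · rcases hcover v hvA with h | h
      · exfalso
        have hm : v ∈ I1 := Finset.mem_inter.mpr ⟨h, hv⟩
        rw [Finset.card_eq_zero.mp ha10] at hm
        simp at hm
      · exact h
  have hcases : 1 ≤ s ∨ (1 ≤ a₁ ∧ 1 ≤ a₂) := by
    rcases Nat.eq_zero_or_pos s with hs0 | hs1
    · right
      constructor
      · rcases Nat.eq_zero_or_pos a₁ with ha10 | h
        · exfalso
          have hsub := hIsubF2 hs0 ha10
          obtain ⟨w, hw⟩ : F1.Nonempty := Finset.card_pos.mp (by omega)
          exact hgrow w (fun hwI => hF12 w hw (hsub hwI))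
            (fun v hv => hcross w hw v (hsub hv))
        · exact h
      · rcases Nat.eq_zero_or_pos a₂ with ha20 | h
        · exfalso
          have hsub := hIsubF1 hs0 ha20
          obtain ⟨w, hw⟩ : F2.Nonempty := Finset.card_pos.mp (by omega)
          exact hgrow w (fun hwI => hF12 w (hsub hwI) hw)
            (fun v hv => fun hadj => hcross v (hsub hv) w hw hadj.symm)
        · exact h
    · left; exact hs1
  -- an edge inside each component
  have hedge : ∀ (F : Finset V) (c : (G.induce ((A : Set V)ᶜ)).ConnectedComponent),
      (∀ v : V, v ∈ F ↔ ∃ hv : v ∈ ((A : Set V)ᶜ),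
        (G.induce ((A : Set V)ᶜ)).connectedComponentMk ⟨v, hv⟩ = c) →
      2 ≤ F.card → ∃ u ∈ F, ∃ w ∈ F, G.Adj u w := by
    intro F c hmem hcard2
    obtain ⟨x, hx, y, hy, hxy⟩ := Finset.one_lt_card.mp (by omega : 1 < F.card)
    obtain ⟨hxS, hcx⟩ := (hmem x).mp hx
    obtain ⟨hyS, hcy⟩ := (hmem y).mp hy
    have hreach : (G.induce ((A : Set V)ᶜ)).Reachable ⟨x, hxS⟩ ⟨y, hyS⟩ :=
      SimpleGraph.ConnectedComponent.exact (hcx.trans hcy.symm)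
    obtain ⟨p⟩ := hreach
    have hpn : ¬ p.Nil := SimpleGraph.Walk.not_nil_of_ne (by
      intro h
      exact hxy (congrArg Subtype.val h))
    have hadj := p.adj_snd hpn
    refine ⟨x, hx, ((p.getVert 1) : V), ?_, hadj⟩
    refine (hmem _).mpr ⟨(p.getVert 1).2, ?_⟩
    rw [← hcx]
    exact (SimpleGraph.ConnectedComponent.connectedComponentMk_eq_of_adj hadj).symm
  have ha1lt : a₁ + 1 ≤ n₁ := by
    rcases Nat.lt_or_ge a₁ n₁ with h | h
    · omega
    · exfalso
      have heq : I1 = F1 := Finset.eq_of_subset_of_card_le hI1_F1 (by omega)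
      obtain ⟨u, hu, w, hw, hadj⟩ := hedge F1 c₁ hmemF1 hn1ge
      have huI : u ∈ I := (Finset.mem_inter.mp (heq ▸ hu)).2
      have hwI : w ∈ I := (Finset.mem_inter.mp (heq ▸ hw)).2
      exact hI (Finset.mem_coe.mpr huI) (Finset.mem_coe.mpr hwI) hadj.ne hadj
  have ha2lt : a₂ + 1 ≤ n₂ := by
    rcases Nat.lt_or_ge a₂ n₂ with h | h
    · omega
    · exfalso
      have heq : I2 = F2 := Finset.eq_of_subset_of_card_le hI2_F2 (by omega)
      obtain ⟨u, hu, w, hw, hadj⟩ := hedge F2 c₂ hmemF2 hn2ge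
      have huI : u ∈ I := (Finset.mem_inter.mp (heq ▸ hu)).2
      have hwI : w ∈ I := (Finset.mem_inter.mp (heq ▸ hw)).2
      exact hI (Finset.mem_coe.mpr huI) (Finset.mem_coe.mpr hwI) hadj.ne hadj
  -- degree bounds
  have hdeg_all : ∀ v : V, deg G v + 1 ≤ n := by
    intro v
    have h := deg_le_of_subset (G := G) (v := v) (T := Finset.univ.erase v)
      (fun u hadj => Finset.mem_erase.mpr ⟨hadj.ne', Finset.mem_univ u⟩)
    rw [Finset.card_erase_of_mem (Finset.mem_univ v), Finset.card_univ, hcard] at h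
    have : 1 ≤ n := by omega
    omega
  have hdegI : ∀ v ∈ I, deg G v + a ≤ n := by
    intro v hv
    have h := deg_le_of_subset (G := G) (v := v) (T := Finset.univ \ I)
      (fun u hadj => by
        simp only [Finset.mem_sdiff, Finset.mem_univ, true_and]
        intro huI
        exact hI (Finset.mem_coe.mpr hv) (Finset.mem_coe.mpr huI) hadj.ne hadj)
    rw [Finset.card_sdiff_of_subset (Finset.subset_univ I), Finset.card_univ, hcard, hIcard] at h
    have han : a ≤ n := by omega
    omega
  have hdeg1 : ∀ v ∈ F1, deg G v + n₂ + 1 ≤ n := by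
    intro v hv
    have hvT : v ∈ Finset.univ \ F2 := Finset.mem_sdiff.mpr ⟨Finset.mem_univ v, hF12 v hv⟩
    have h := deg_le_of_subset (G := G) (v := v) (T := (Finset.univ \ F2).erase v)
      (fun u hadj => Finset.mem_erase.mpr ⟨hadj.ne', Finset.mem_sdiff.mpr
        ⟨Finset.mem_univ u, fun huF2 => hcross v hv u huF2 hadj⟩⟩)
    rw [Finset.card_erase_of_mem hvT, Finset.card_sdiff_of_subset (Finset.subset_univ F2),
      Finset.card_univ, hcard] at h
    have hn2n : n₂ ≤ n := by
      rw [hn2def, ← hcard]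
      exact Finset.card_le_card (Finset.subset_univ F2)
    omega
  have hdeg2 : ∀ v ∈ F2, deg G v + n₁ + 1 ≤ n := by
    intro v hv
    have hvT : v ∈ Finset.univ \ F1 :=
      Finset.mem_sdiff.mpr ⟨Finset.mem_univ v, fun h => hF12 v h hv⟩
    have h := deg_le_of_subset (G := G) (v := v) (T := (Finset.univ \ F1).erase v)
      (fun u hadj => Finset.mem_erase.mpr ⟨hadj.ne', Finset.mem_sdiff.mpr
        ⟨Finset.mem_univ u, fun huF1 => hcross u huF1 v hv hadj.symm⟩⟩)
    rw [Finset.card_erase_of_mem hvT, Finset.card_sdiff_of_subset (Finset.subset_univ F1),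
      Finset.card_univ, hcard] at h
    have hn1n : n₁ ≤ n := by
      rw [hn1def, ← hcard]
      exact Finset.card_le_card (Finset.subset_univ F1)
    omega
  have hdeg1I : ∀ v ∈ F1, v ∈ I → deg G v + n₂ + s + a₁ ≤ n := by
    intro v hv hvI
    have hdU : Disjoint F2 (IA ∪ I1) := by
      rw [Finset.disjoint_union_right]
      exact ⟨(hdisjA2.mono hIA_A (le_refl F2)).symm, (hdisj12.mono hI1_F1 (le_refl F2)).symm⟩
    have hdU2 : Disjoint IA I1 := hdisjA1.mono hIA_A hI1_F1
    have h := deg_le_of_subset (G := G) (v := v) (T := Finset.univ \ (F2 ∪ IA ∪ I1))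
      (fun u hadj => by
        simp only [Finset.mem_sdiff, Finset.mem_univ, true_and, Finset.mem_union]
        push_neg
        refine ⟨⟨fun huF2 => hcross v hv u huF2 hadj, ?_⟩, ?_⟩
        · intro huIA
          exact hI (Finset.mem_coe.mpr hvI) (Finset.mem_coe.mpr (Finset.mem_inter.mp huIA).2)
            hadj.ne hadj
        · intro huI1
          exact hI (Finset.mem_coe.mpr hvI) (Finset.mem_coe.mpr (Finset.mem_inter.mp huI1).2)
            hadj.ne hadj)
    have hcardU : (F2 ∪ IA ∪ I1).card = n₂ + s + a₁ := by
      rw [Finset.union_assoc, Finset.card_union_of_disjoint hdU,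
        Finset.card_union_of_disjoint hdU2]
      omega
    have hUn : (F2 ∪ IA ∪ I1).card ≤ n := by
      rw [← hcard]
      exact Finset.card_le_card (Finset.subset_univ _)
    rw [Finset.card_sdiff_of_subset (Finset.subset_univ _), Finset.card_univ, hcard, hcardU] at h
    rw [hcardU] at hUn
    omega
  have hdeg2I : ∀ v ∈ F2, v ∈ I → deg G v + n₁ + s + a₂ ≤ n := by
    intro v hv hvI
    have hdU : Disjoint F1 (IA ∪ I2) := by
      rw [Finset.disjoint_union_right]
      exact ⟨(hdisjA1.mono hIA_A (le_refl F1)).symm, hdisj12.mono (le_refl F1) hI2_F2⟩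
    have hdU2 : Disjoint IA I2 := hdisjA2.mono hIA_A hI2_F2
    have h := deg_le_of_subset (G := G) (v := v) (T := Finset.univ \ (F1 ∪ IA ∪ I2))
      (fun u hadj => by
        simp only [Finset.mem_sdiff, Finset.mem_univ, true_and, Finset.mem_union]
        push_neg
        refine ⟨⟨fun huF1 => hcross u huF1 v hv hadj.symm, ?_⟩, ?_⟩
        · intro huIA
          exact hI (Finset.mem_coe.mpr hvI) (Finset.mem_coe.mpr (Finset.mem_inter.mp huIA).2)
            hadj.ne hadj
        · intro huI2
          exact hI (Finset.mem_coe.mpr hvI) (Finset.mem_coe.mpr (Finset.mem_inter.mp huI2).2)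
            hadj.ne hadj)
    have hcardU : (F1 ∪ IA ∪ I2).card = n₁ + s + a₂ := by
      rw [Finset.union_assoc, Finset.card_union_of_disjoint hdU,
        Finset.card_union_of_disjoint hdU2]
      omega
    have hUn : (F1 ∪ IA ∪ I2).card ≤ n := by
      rw [← hcard]
      exact Finset.card_le_card (Finset.subset_univ _)
    rw [Finset.card_sdiff_of_subset (Finset.subset_univ _), Finset.card_univ, hcard, hcardU] at h
    rw [hcardU] at hUn
    omega
  -- eccentricity bounds
  have hecc1 : ∀ v : V, 1 ≤ ecc G v := by
    intro v
    have h1 : 1 < Fintype.card V := by omega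
    obtain ⟨u, hu⟩ := Fintype.exists_ne_of_one_lt_card h1 v
    exact one_le_ecc (hGconn.preconnected v u) (Ne.symm hu)
  have hecc2F1 : ∀ v ∈ F1, 2 ≤ ecc G v := by
    intro v hv
    obtain ⟨w, hw⟩ : F2.Nonempty := Finset.card_pos.mp (by omega)
    refine two_le_ecc (hGconn.preconnected v w) ?_ (hcross v hv w hw)
    intro h
    exact hF12 v hv (h ▸ hw)
  have hecc2F2 : ∀ v ∈ F2, 2 ≤ ecc G v := by
    intro v hv
    obtain ⟨w, hw⟩ : F1.Nonempty := Finset.card_pos.mp (by omega)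
    refine two_le_ecc (hGconn.preconnected v w) ?_ (fun h => hcross w hw v hv h.symm)
    intro h
    exact hF12 w hw (h ▸ hv)
  -- sum over A
  have hsumA : ∑ v ∈ A, (deg G v : ℝ) / (ecc G v) ≤
      (s : ℝ) * ((n : ℝ) - a) + ((k : ℝ) - s) * ((n : ℝ) - 1) := by
    have hpt : ∀ v ∈ A, (deg G v : ℝ) / (ecc G v) ≤
        (if v ∈ I then (n : ℝ) - a else (n : ℝ) - 1) := by
      intro v hv
      have he1 : (1 : ℝ) ≤ (ecc G v : ℝ) := by exact_mod_cast hecc1 v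
      have hds : (deg G v : ℝ) / (ecc G v) ≤ (deg G v : ℝ) :=
        div_le_self (Nat.cast_nonneg _) he1
      refine le_trans hds ?_
      split_ifs with hvI
      · have h' : (deg G v : ℝ) + a ≤ n := by exact_mod_cast hdegI v hvI
        linarith
      · have h' : (deg G v : ℝ) + 1 ≤ n := by exact_mod_cast hdeg_all v
        linarith
    calc ∑ v ∈ A, (deg G v : ℝ) / (ecc G v)
        ≤ ∑ v ∈ A, (if v ∈ I then (n : ℝ) - a else (n : ℝ) - 1) := Finset.sum_le_sum hpt
      _ = (s : ℝ) * ((n : ℝ) - a) + ((k : ℝ) - s) * ((n : ℝ) - 1) := by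
          rw [Finset.sum_ite, Finset.sum_const, Finset.sum_const]
          have hc1 : (A.filter (fun v => v ∈ I)).card = s := by
            rw [Finset.filter_mem_eq_inter]
          have hc2 : (A.filter (fun v => ¬ v ∈ I)).card = k - s := by
            have hh := Finset.card_filter_add_card_filter_not
              (s := A) (p := fun v => v ∈ I)
            rw [hc1, hAcard] at hh
            omega
          rw [hc1, hc2, nsmul_eq_mul, nsmul_eq_mul, Nat.cast_sub hsk]
  -- sum over F1
  have hsum1 : ∑ v ∈ F1, (deg G v : ℝ) / (ecc G v) ≤
      (a₁ : ℝ) * (((n : ℝ) - n₂ - s - a₁) / 2)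
        + ((n₁ : ℝ) - a₁) * (((n : ℝ) - n₂ - 1) / 2) := by
    have hpt : ∀ v ∈ F1, (deg G v : ℝ) / (ecc G v) ≤
        (if v ∈ I then ((n : ℝ) - n₂ - s - a₁) / 2 else ((n : ℝ) - n₂ - 1) / 2) := by
      intro v hv
      have he2 : (2 : ℝ) ≤ (ecc G v : ℝ) := by exact_mod_cast hecc2F1 v hv
      have hepos : (0 : ℝ) < (ecc G v : ℝ) := by linarith
      have hds : (deg G v : ℝ) / (ecc G v) ≤ (deg G v : ℝ) / 2 :=
        div_le_div_of_nonneg_left (Nat.cast_nonneg _) (by norm_num) he2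
      refine le_trans hds ?_
      split_ifs with hvI
      · have h' : (deg G v : ℝ) + n₂ + s + a₁ ≤ n := by exact_mod_cast hdeg1I v hv hvI
        linarith
      · have h' : (deg G v : ℝ) + n₂ + 1 ≤ n := by exact_mod_cast hdeg1 v hv
        linarith
    calc ∑ v ∈ F1, (deg G v : ℝ) / (ecc G v)
        ≤ ∑ v ∈ F1, (if v ∈ I then ((n : ℝ) - n₂ - s - a₁) / 2
            else ((n : ℝ) - n₂ - 1) / 2) := Finset.sum_le_sum hpt
      _ = (a₁ : ℝ) * (((n : ℝ) - n₂ - s - a₁) / 2)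
            + ((n₁ : ℝ) - a₁) * (((n : ℝ) - n₂ - 1) / 2) := by
          rw [Finset.sum_ite, Finset.sum_const, Finset.sum_const]
          have hc1 : (F1.filter (fun v => v ∈ I)).card = a₁ := by
            rw [Finset.filter_mem_eq_inter]
          have hc2 : (F1.filter (fun v => ¬ v ∈ I)).card = n₁ - a₁ := by
            have hh := Finset.card_filter_add_card_filter_not
              (s := F1) (p := fun v => v ∈ I)
            rw [hc1] at hh
            omega
          rw [hc1, hc2, nsmul_eq_mul, nsmul_eq_mul, Nat.cast_sub ha1n1]
  -- sum over F2
  have hsum2 : ∑ v ∈ F2, (deg G v : ℝ) / (ecc G v) ≤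
      (a₂ : ℝ) * (((n : ℝ) - n₁ - s - a₂) / 2)
        + ((n₂ : ℝ) - a₂) * (((n : ℝ) - n₁ - 1) / 2) := by
    have hpt : ∀ v ∈ F2, (deg G v : ℝ) / (ecc G v) ≤
        (if v ∈ I then ((n : ℝ) - n₁ - s - a₂) / 2 else ((n : ℝ) - n₁ - 1) / 2) := by
      intro v hv
      have he2 : (2 : ℝ) ≤ (ecc G v : ℝ) := by exact_mod_cast hecc2F2 v hv
      have hds : (deg G v : ℝ) / (ecc G v) ≤ (deg G v : ℝ) / 2 :=
        div_le_div_of_nonneg_left (Nat.cast_nonneg _) (by norm_num) he2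
      refine le_trans hds ?_
      split_ifs with hvI
      · have h' : (deg G v : ℝ) + n₁ + s + a₂ ≤ n := by exact_mod_cast hdeg2I v hv hvI
        linarith
      · have h' : (deg G v : ℝ) + n₁ + 1 ≤ n := by exact_mod_cast hdeg2 v hv
        linarith
    calc ∑ v ∈ F2, (deg G v : ℝ) / (ecc G v)
        ≤ ∑ v ∈ F2, (if v ∈ I then ((n : ℝ) - n₁ - s - a₂) / 2
            else ((n : ℝ) - n₁ - 1) / 2) := Finset.sum_le_sum hpt
      _ = (a₂ : ℝ) * (((n : ℝ) - n₁ - s - a₂) / 2)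
            + ((n₂ : ℝ) - a₂) * (((n : ℝ) - n₁ - 1) / 2) := by
          rw [Finset.sum_ite, Finset.sum_const, Finset.sum_const]
          have hc1 : (F2.filter (fun v => v ∈ I)).card = a₂ := by
            rw [Finset.filter_mem_eq_inter]
          have hc2 : (F2.filter (fun v => ¬ v ∈ I)).card = n₂ - a₂ := by
            have hh := Finset.card_filter_add_card_filter_not
              (s := F2) (p := fun v => v ∈ I)
            rw [hc1] at hh
            omega
          rw [hc1, hc2, nsmul_eq_mul, nsmul_eq_mul, Nat.cast_sub ha2n2]
  -- total upper bound on cei G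
  have hceiG : cei G ≤ (s : ℝ) * ((n : ℝ) - a) + ((k : ℝ) - s) * ((n : ℝ) - 1)
      + ((a₁ : ℝ) * (((n : ℝ) - n₂ - s - a₁) / 2)
        + ((n₁ : ℝ) - a₁) * (((n : ℝ) - n₂ - 1) / 2))
      + ((a₂ : ℝ) * (((n : ℝ) - n₁ - s - a₂) / 2)
        + ((n₂ : ℝ) - a₂) * (((n : ℝ) - n₁ - 1) / 2)) := by
    have hsplit : cei G = (∑ v ∈ A, (deg G v : ℝ) / (ecc G v))
        + (∑ v ∈ F1, (deg G v : ℝ) / (ecc G v))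
        + (∑ v ∈ F2, (deg G v : ℝ) / (ecc G v)) := by
      rw [cei, ← huniv, Finset.sum_union (by
          rw [Finset.disjoint_union_left]; exact ⟨hdisjA2, hdisj12⟩),
        Finset.sum_union hdisjA1]
    rw [hsplit]
    linarith [hsumA, hsum1, hsum2]
  -- lower bound on cei G via Sgraph and maximality
  have hSle : (k : ℝ) * ((n : ℝ) - 1) + (k : ℝ) / 2
      + ((n : ℝ) - k - a) * ((n : ℝ) - 2) / 2
      + ((a : ℝ) - 1) * ((n : ℝ) - a) / 2 ≤ cei G :=
    le_trans (sgraph_cei_lower hk ha hn)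
      (hmax (Fin n) (Sgraph n k a) (Fintype.card_fin n)
        (sgraph_kconnected hk ha hn) (sgraph_indepNum hk ha hn))
  -- numeric contradiction
  have hnr : (k : ℝ) + n₁ + n₂ = n := by exact_mod_cast hcards
  have har : (s : ℝ) + a₁ + a₂ = a := by exact_mod_cast hIsplit
  have ha1r : (a₁ : ℝ) + 1 ≤ n₁ := by exact_mod_cast ha1lt
  have ha2r : (a₂ : ℝ) + 1 ≤ n₂ := by exact_mod_cast ha2lt
  have hn2r : (2 : ℝ) ≤ n₂ := by exact_mod_cast hn2ge
  have hn1r : (2 : ℝ) ≤ n₁ := by exact_mod_cast hn1ge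
  have hkr : (1 : ℝ) ≤ k := by exact_mod_cast hk
  have hs0r : (0 : ℝ) ≤ s := Nat.cast_nonneg s
  have ha10r : (0 : ℝ) ≤ a₁ := Nat.cast_nonneg a₁
  have ha20r : (0 : ℝ) ≤ a₂ := Nat.cast_nonneg a₂
  rcases hcases with hs1 | ⟨h11, h12⟩
  · have hs1r : (1 : ℝ) ≤ s := by exact_mod_cast hs1
    nlinarith [hceiG, hSle, mul_nonneg (by linarith : (0:ℝ) ≤ (n₁:ℝ) - 1 - a₁) ha20r,
      mul_nonneg (by linarith : (0:ℝ) ≤ (n₁:ℝ) - 2) (by linarith : (0:ℝ) ≤ (n₂:ℝ) - 1 - a₂),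
      mul_nonneg (by linarith : (0:ℝ) ≤ (s:ℝ) - 1) (by linarith : (0:ℝ) ≤ (s:ℝ) + 2),
      mul_nonneg hs0r (add_nonneg ha10r ha20r)]
  · have h11r : (1 : ℝ) ≤ a₁ := by exact_mod_cast h11
    have h12r : (1 : ℝ) ≤ a₂ := by exact_mod_cast h12
    nlinarith [hceiG, hSle,
      mul_nonneg (by linarith : (0:ℝ) ≤ (n₁:ℝ) - 1 - a₁) (by linarith : (0:ℝ) ≤ (a₂:ℝ) - 1),
      mul_nonneg (by linarith : (0:ℝ) ≤ (n₂:ℝ) - 1 - a₂) (by linarith : (0:ℝ) ≤ (n₁:ℝ) - 2),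
      mul_nonneg hs0r hs0r,
      mul_nonneg hs0r (add_nonneg ha10r ha20r)]
end CEI
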